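/- (Instance of Theorem 1: existence of the Stackelberg equilibrium in the interior-response regime.) Assume for every j that r_e·X_j/(e−1) < k_e^j < c_e·X_j·e/(e−1) and r_h·Y_j/(e−1) < k_h^j < c_h·Y_j·e/(e−1). Then there exists a strategy profile (p̃_e, p̃_h, (α_j, β_j)_{j=1..n}) with p̃_e ∈ [c_e, r_e], p̃_h ∈ [c_h, r_h], α_j = (1/X_j)·(k_e^j/p̃_e − 1/b_e^j) and β_j = (1/Y_j)·(k_h^j/p̃_h − 1/b_h^j), such that: (i) for every j, (α_j, β_j) ∈ (0,1) × (0,1) and U_j(p̃_e, p̃_h, α_j, β_j) ≥ U_j(p̃_e, p̃_h, α, β) for all (α,β) ∈ [0,1] × [0,1]; and (ii) V_e(p̃_e) ≥ V_e(p) for all p ∈ [c_e, r_e] and V_h(p̃_h) ≥ V_h(p) for all p ∈ [c_h, r_h]; i.e., no leader or follower can improve its utility or profit by a unilateral deviation. -/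

import Mathlib

/-- The utility of DES `j` given offered prices `p_e, p_h` and dispatching
factors `(α, β)`, with `b_e^j = (e−1)/X_j`, `b_h^j = (e−1)/Y_j`. -/
noncomputable def desU (Xj Yj kej khj C0j pe ph α β : ℝ) : ℝ :=
  kej * Real.log (1 + ((Real.exp 1 - 1) / Xj) * Xj * α)
  + khj * Real.log (1 + ((Real.exp 1 - 1) / Yj) * Yj * β)
  + pe * Xj * (1 - α) + ph * Yj * (1 - β) - C0j

/-- An aggregator's profit in the interior-response regime:
`V(p) = (r − p)·Σ_j (Z_j + 1/b^j − k^j/p)` with `b^j = (e−1)/Z_j`. -/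
noncomputable def aggV (n : ℕ) (Z k : Fin n → ℝ) (r p : ℝ) : ℝ :=
  (r - p) * ∑ j, (Z j + 1 / ((Real.exp 1 - 1) / Z j) - k j / p)

lemma aux_one (E k X p α αs : ℝ) (hE : 0 < E) (hX : 0 < X) (hp : 0 < p) (hk : 0 < k)
    (hαs : αs = (1/X) * (k/p - X/E)) (h0 : 0 < αs) (hα0 : 0 ≤ α) :
    k * Real.log (1 + E*α) + p*X*(1-α) ≤ k * Real.log (1 + E*αs) + p*X*(1-αs) := by
  have hs : 1 + E*αs = E*k/(p*X) := by
    rw [hαs]; field_simp; ring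
  have hspos : 0 < 1 + E*αs := by rw [hs]; positivity
  have hspos' : 0 < 1 + E*α := by positivity
  have hlog := Real.log_le_sub_one_of_pos (show (0:ℝ) < (1+E*α)/(1+E*αs) by positivity)
  rw [Real.log_div (ne_of_gt hspos') (ne_of_gt hspos)] at hlog
  have h2 : k * (Real.log (1+E*α) - Real.log (1+E*αs)) ≤ k * ((1+E*α)/(1+E*αs) - 1) :=
    mul_le_mul_of_nonneg_left hlog hk.le
  have h3 : k * ((1+E*α)/(1+E*αs) - 1) = p*X*(α - αs) := by
    rw [hs, hαs]; field_simp; ring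
  rw [h3] at h2
  linarith [h2]

lemma aux_interior (E k X p c r : ℝ) (hE : 0 < E) (hX : 0 < X) (hc : 0 < c)
    (hp : p ∈ Set.Icc c r)
    (hlo : r * X / E < k) (hhi : k < c * X * (E+1) / E) :
    (1 / X) * (k / p - X / E) ∈ Set.Ioo (0:ℝ) 1 := by
  obtain ⟨hp1, hp2⟩ := hp
  have hp0 : 0 < p := lt_of_lt_of_le hc hp1
  constructor
  · have h1 : p * X / E < k := lt_of_le_of_lt (by
gcongr) hlo
    have h2 : X / E < k / p := by
      rw [div_lt_div_iff₀ hE hp0]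
      rw [div_lt_iff₀ hE] at h1
      nlinarith
    have h3 : 0 < k / p - X / E := by linarith
    positivity
  · have h1 : k < p * X * (E+1) / E := lt_of_lt_of_le hhi (by
gcongr)
    have h2 : k / p - X / E < X := by
      rw [lt_div_iff₀ hE] at h1
      rw [sub_lt_iff_lt_add, div_lt_iff₀ hp0]
      have e3 : (X + X / E) * p * E = p * X * (E + 1) := by field_simp
      rw [← mul_lt_mul_iff_left₀ hE, e3]
      exact h1
    rw [one_div, inv_mul_eq_div, div_lt_one hX]
    exact h2

lemma aux_max (n : ℕ) (Z k : Fin n → ℝ) (c r : ℝ) (hc : 0 < c) (hcr : c ≤ r) :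
    ∃ pt ∈ Set.Icc c r, ∀ p ∈ Set.Icc c r, aggV n Z k r p ≤ aggV n Z k r pt := by
  have hcont : ContinuousOn (aggV n Z k r) (Set.Icc c r) := by
    unfold aggV
    apply ContinuousOn.mul (by fun_prop)
    apply continuousOn_finset_sum
    intro j _
    apply ContinuousOn.sub continuousOn_const
    exact ContinuousOn.div continuousOn_const continuousOn_id
      (fun p hp => (lt_of_lt_of_le hc hp.1).ne')
  obtain ⟨pt, hpt, hmax⟩ := isCompact_Icc.exists_isMaxOn (Set.nonempty_Icc.mpr hcr) hcont
  exact ⟨pt, hpt, fun p hp => hmax hp⟩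

/-- Instance of Theorem 1: existence of a Stackelberg equilibrium in the
interior-response regime. There are prices `(p̃_e, p̃_h)` in the admissible
box and follower responses `(α_j, β_j)` given by the stationary dispatching
factors such that no leader or follower can improve by a unilateral
deviation. -/
theorem stmt_16 (n : ℕ) (hn : 1 ≤ n) (X Y ke kh C0 : Fin n → ℝ)
    (hX : ∀ j, 0 < X j) (hY : ∀ j, 0 < Y j)
    (hke : ∀ j, 0 < ke j) (hkh : ∀ j, 0 < kh j)
    (ce re ch rh : ℝ) (hce : 0 < ce) (hcr : ce < re) (hch : 0 < ch) (hcr' : ch < rh)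
    (hkeB : ∀ j, re * X j / (Real.exp 1 - 1) < ke j ∧
      ke j < ce * X j * Real.exp 1 / (Real.exp 1 - 1))
    (hkhB : ∀ j, rh * Y j / (Real.exp 1 - 1) < kh j ∧
      kh j < ch * Y j * Real.exp 1 / (Real.exp 1 - 1)) :
    ∃ pte pth : ℝ, pte ∈ Set.Icc ce re ∧ pth ∈ Set.Icc ch rh ∧
      (∀ j : Fin n,
        (1 / X j) * (ke j / pte - 1 / ((Real.exp 1 - 1) / X j)) ∈ Set.Ioo (0:ℝ) 1 ∧
        (1 / Y j) * (kh j / pth - 1 / ((Real.exp 1 - 1) / Y j)) ∈ Set.Ioo (0:ℝ) 1 ∧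
        ∀ α ∈ Set.Icc (0:ℝ) 1, ∀ β ∈ Set.Icc (0:ℝ) 1,
          desU (X j) (Y j) (ke j) (kh j) (C0 j) pte pth α β ≤
            desU (X j) (Y j) (ke j) (kh j) (C0 j) pte pth
              ((1 / X j) * (ke j / pte - 1 / ((Real.exp 1 - 1) / X j)))
              ((1 / Y j) * (kh j / pth - 1 / ((Real.exp 1 - 1) / Y j)))) ∧
      (∀ p ∈ Set.Icc ce re, aggV n X ke re p ≤ aggV n X ke re pte) ∧
      (∀ p ∈ Set.Icc ch rh, aggV n Y kh rh p ≤ aggV n Y kh rh pth) := by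
  have hE : 0 < Real.exp 1 - 1 := by
    have := Real.exp_one_gt_d9; linarith
  set E := Real.exp 1 - 1 with hEdef
  obtain ⟨pte, hpte, hmaxe⟩ := aux_max n X ke ce re hce hcr.le
  obtain ⟨pth, hpth, hmaxh⟩ := aux_max n Y kh ch rh hch hcr'.le
  have hpte0 : 0 < pte := lt_of_lt_of_le hce hpte.1
  have hpth0 : 0 < pth := lt_of_lt_of_le hch hpth.1
  refine ⟨pte, pth, hpte, hpth, fun j => ?_, hmaxe, hmaxh⟩
  have e1 : (1:ℝ) / (E / X j) = X j / E := one_div_div _ _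
  have e2 : (1:ℝ) / (E / Y j) = Y j / E := one_div_div _ _
  have hie : (1 / X j) * (ke j / pte - X j / E) ∈ Set.Ioo (0:ℝ) 1 := by
    refine aux_interior E (ke j) (X j) pte ce re hE (hX j) hce hpte (hkeB j).1 ?_
    have : ce * X j * (E + 1) / E = ce * X j * Real.exp 1 / E := by
      rw [hEdef]; ring_nf
    rw [this]; exact (hkeB j).2
  have hih : (1 / Y j) * (kh j / pth - Y j / E) ∈ Set.Ioo (0:ℝ) 1 := by
    refine aux_interior E (kh j) (Y j) pth ch rh hE (hY j) hch hpth (hkhB j).1 ?_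
    have : ch * Y j * (E + 1) / E = ch * Y j * Real.exp 1 / E := by
      rw [hEdef]; ring_nf
    rw [this]; exact (hkhB j).2
  rw [e1, e2]
  refine ⟨hie, hih, fun α hα β hβ => ?_⟩
  unfold desU
  rw [div_mul_cancel₀ _ (hX j).ne', div_mul_cancel₀ _ (hY j).ne']
  have h1 := aux_one E (ke j) (X j) pte α ((1 / X j) * (ke j / pte - X j / E))
    hE (hX j) hpte0 (hke j) rfl hie.1 hα.1
  have h2 := aux_one E (kh j) (Y j) pth β ((1 / Y j) * (kh j / pth - Y j / E))
    hE (hY j) hpth0 (hkh j) rfl hih.1 hβ.1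
  linarith
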